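/- Let k be a field, R = k⟦t⟧ the formal power series ring, B a commutative R-algebra that is free of rank d as an R-module, and A ⊆ B an R-subalgebra that is also free of rank d as an R-module. Let α be an R-basis of A and β an R-basis of B, and assume disc_R(β) ≠ 0. Then the quotient B/A is an R-module of finite length, disc_R(α) ≠ 0, and ord_t(disc_R(α)) = ord_t(disc_R(β)) + 2·length_R(B/A), where ord_t denotes the t-adic valuation on R. -/

import Mathlib

open Submodule PowerSeries

section CSmachinery

variable {α β : Type*}

lemma myOrderIso_covBy [Preorder α] [Preorder β] (e : α ≃o β) {x y : α} (h : x ⋖ y) :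
    e x ⋖ e y := by
  refine ⟨e.strictMono h.lt, fun z h1 h2 => ?_⟩
  have h1' : x < e.symm z := by
    rw [← e.symm_apply_apply x]; exact e.symm.strictMono h1
  have h2' : e.symm z < y := by
    rw [← e.symm_apply_apply y]; exact e.symm.strictMono h2
  exact h.2 h1' h2'

variable {R M M' : Type*} [Ring R] [AddCommGroup M] [Module R M]
  [AddCommGroup M'] [Module R M']

lemma covBy_map_subtype (N : Submodule R M) {x y : Submodule R N} (h : x ⋖ y) :
    map N.subtype x ⋖ map N.subtype y := by
  have h2 := myOrderIso_covBy (Submodule.MapSubtype.orderIso N) h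
  refine ⟨h2.lt, fun z h1' h2' => ?_⟩
  have hzN : z ≤ N := le_trans h2'.le ((Submodule.MapSubtype.orderIso N) y).2
  have h1'' : (Submodule.MapSubtype.orderIso N) x < ⟨z, hzN⟩ := Subtype.mk_lt_mk.2 h1'
  have h2'' : (⟨z, hzN⟩ : {p' : Submodule R M // p' ≤ N}) < (Submodule.MapSubtype.orderIso N) y :=
    Subtype.mk_lt_mk.2 h2'
  exact h2.2 h1'' h2''

lemma covBy_comap_mkQ (p : Submodule R M) {x y : Submodule R (M ⧸ p)} (h : x ⋖ y) :
    comap p.mkQ x ⋖ comap p.mkQ y := by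
  have h2 := myOrderIso_covBy (Submodule.comapMkQRelIso p) h
  refine ⟨h2.lt, fun z h1' h2' => ?_⟩
  have hzp : p ≤ z := le_trans ((Submodule.comapMkQRelIso p) x).2 h1'.le
  have h1'' : (Submodule.comapMkQRelIso p) x < ⟨z, hzp⟩ := Subtype.mk_lt_mk.2 h1'
  have h2'' : (⟨z, hzp⟩ : {p' : Submodule R M // p ≤ p'}) < (Submodule.comapMkQRelIso p) y :=
    Subtype.mk_lt_mk.2 h2'
  exact h2.2 h1'' h2''

lemma covBy_map_mkQ (p : Submodule R M) {I J : Submodule R M} (hI : p ≤ I) (hJ : p ≤ J)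
    (h : I ⋖ J) : map p.mkQ I ⋖ map p.mkQ J := by
  have key : ∀ (K : Submodule R M) (hK : p ≤ K),
      (Submodule.comapMkQRelIso p).symm ⟨K, hK⟩ = map p.mkQ K := by
    intro K hK
    rw [OrderIso.symm_apply_eq]
    refine Subtype.ext ?_
    show K = comap p.mkQ (map p.mkQ K)
    rw [Submodule.comap_map_eq, Submodule.ker_mkQ, sup_eq_left.2 hK]
  have hsub : (⟨I, hI⟩ : Set.Ici p) ⋖ ⟨J, hJ⟩ := by
    refine ⟨by exact_mod_cast h.lt, fun z h1 h2 => ?_⟩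
    exact h.2 (show I < z.1 from h1) (show z.1 < J from h2)
  have := myOrderIso_covBy (Submodule.comapMkQRelIso p).symm hsub
  rwa [key I hI, key J hJ] at this

/-- Combine composition series of a submodule and the corresponding quotient. -/
lemma exists_compositionSeries_of_submodule_quotient (N : Submodule R M)
    (s₁ : CompositionSeries (Submodule R N)) (h₁h : s₁.head = ⊥) (h₁l : s₁.last = ⊤)
    (s₂ : CompositionSeries (Submodule R (M ⧸ N))) (h₂h : s₂.head = ⊥) (h₂l : s₂.last = ⊤) :
    ∃ s : CompositionSeries (Submodule R M),
      s.head = ⊥ ∧ s.last = ⊤ ∧ s.length = s₁.length + s₂.length := by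
  let t₁ : CompositionSeries (Submodule R M) :=
    ⟨s₁.length, fun i => map N.subtype (s₁ i), fun i => covBy_map_subtype N (s₁.step i)⟩
  let t₂ : CompositionSeries (Submodule R M) :=
    ⟨s₂.length, fun i => comap N.mkQ (s₂ i), fun i => covBy_comap_mkQ N (s₂.step i)⟩
  have hconn : t₁.last = t₂.head := by
    show map N.subtype (s₁.last) = comap N.mkQ (s₂.head)
    rw [h₁l, h₂h, Submodule.comap_bot, Submodule.ker_mkQ, Submodule.map_top,
      Submodule.range_subtype]
  refine ⟨RelSeries.smash t₁ t₂ hconn, ?_, ?_, rfl⟩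
  · rw [RelSeries.head_smash]
    show map N.subtype (s₁.head) = ⊥
    rw [h₁h, Submodule.map_bot]
  · rw [RelSeries.last_smash]
    show comap N.mkQ (s₂.last) = ⊤
    rw [h₂l, Submodule.comap_top]

/-- Transport a composition series along a linear equivalence. -/
lemma exists_compositionSeries_congr (e : M ≃ₗ[R] M')
    (s : CompositionSeries (Submodule R M)) (hh : s.head = ⊥) (hl : s.last = ⊤) :
    ∃ s' : CompositionSeries (Submodule R M'),
      s'.head = ⊥ ∧ s'.last = ⊤ ∧ s'.length = s.length := by
  let f : Submodule R M ≃o Submodule R M' := Submodule.orderIsoMapComap e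
  refine ⟨⟨s.length, fun i => f (s i), fun i => myOrderIso_covBy f (s.step i)⟩, ?_, ?_, rfl⟩
  · show f s.head = ⊥; rw [hh, OrderIso.map_bot]
  · show f s.last = ⊤; rw [hl, OrderIso.map_top]

lemma exists_compositionSeries_prod
    (s₁ : CompositionSeries (Submodule R M)) (h₁h : s₁.head = ⊥) (h₁l : s₁.last = ⊤)
    (s₂ : CompositionSeries (Submodule R M')) (h₂h : s₂.head = ⊥) (h₂l : s₂.last = ⊤) :
    ∃ s : CompositionSeries (Submodule R (M × M')),
      s.head = ⊥ ∧ s.last = ⊤ ∧ s.length = s₁.length + s₂.length := by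
  set N : Submodule R (M × M') := LinearMap.ker (LinearMap.snd R M M') with hN
  have e₁ : M ≃ₗ[R] N := by
    rw [hN, ← LinearMap.range_inl]
    exact LinearEquiv.ofInjective (LinearMap.inl R M M') LinearMap.inl_injective
  have hsnd : Function.Surjective (LinearMap.snd R M M') := fun y => ⟨(0, y), rfl⟩
  have e₂ : ((M × M') ⧸ N) ≃ₗ[R] M' := LinearMap.quotKerEquivOfSurjective _ hsnd
  obtain ⟨t₁, th, tl, tlen⟩ := exists_compositionSeries_congr e₁ s₁ h₁h h₁l
  obtain ⟨t₂, th₂, tl₂, tlen₂⟩ := exists_compositionSeries_congr e₂.symm s₂ h₂h h₂l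
  obtain ⟨s, a, b, c⟩ :=
    exists_compositionSeries_of_submodule_quotient N t₁ th tl t₂ th₂ tl₂
  exact ⟨s, a, b, by omega⟩

lemma exists_compositionSeries_pi {n : ℕ} (Q : Fin n → Type*) [∀ j, AddCommGroup (Q j)]
    [∀ j, Module R (Q j)] (L : Fin n → ℕ)
    (H : ∀ j, ∃ s : CompositionSeries (Submodule R (Q j)),
      s.head = ⊥ ∧ s.last = ⊤ ∧ s.length = L j) :
    ∃ s : CompositionSeries (Submodule R (∀ j, Q j)),
      s.head = ⊥ ∧ s.last = ⊤ ∧ s.length = ∑ j, L j := by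
  induction n with
  | zero =>
    refine ⟨RelSeries.singleton _ ⊥, rfl, ?_, by simp⟩
    have : Subsingleton (∀ j, Q j) := ⟨fun a b => by ext j; exact j.elim0⟩
    exact Subsingleton.elim _ _
  | succ m ih =>
    obtain ⟨s₁, h1, h2, h3⟩ := H 0
    obtain ⟨s₂, g1, g2, g3⟩ := ih (fun j => Q j.succ) (fun j => L j.succ) (fun j => H j.succ)
    obtain ⟨s, a, b, c⟩ := exists_compositionSeries_prod s₁ h1 h2 s₂ g1 g2
    have e : (Q 0 × ∀ j : Fin m, Q j.succ) ≃ₗ[R] ∀ j, Q j :=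
      { toFun := fun p => Fin.cons p.1 p.2
        invFun := fun f => (f 0, fun j => f j.succ)
        map_add' := fun a b => by
          funext j
          induction j using Fin.cases <;> simp
        map_smul' := fun r a => by
          funext j
          induction j using Fin.cases <;> simp
        left_inv := fun p => by simp
        right_inv := fun f => by
          funext j
          induction j using Fin.cases <;> simp }
    obtain ⟨s', a', b', c'⟩ := exists_compositionSeries_congr e s a b
    refine ⟨s', a', b', ?_⟩
    rw [c', c, h3, g3, Fin.sum_univ_succ]

end CSmachinery

section DVRquot
variable {k : Type*} [Field k]

lemma X_pow_dvd_X_pow_iff {a b : ℕ} :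
    (X : k⟦X⟧) ^ a ∣ (X : k⟦X⟧) ^ b ↔ a ≤ b := by
  constructor
  · rintro ⟨g, hg⟩
    have h := congrArg PowerSeries.order hg
    rw [order_mul, order_X_pow, order_X_pow] at h
    have : (a : ℕ∞) ≤ (b : ℕ∞) := h ▸ le_self_add
    exact_mod_cast this
  · exact fun h => pow_dvd_pow _ h

lemma span_X_pow_covBy (j : ℕ) :
    (Ideal.span {(X : k⟦X⟧) ^ (j + 1)}) ⋖ (Ideal.span {(X : k⟦X⟧) ^ j}) := by
  have hlt : Ideal.span {(X : k⟦X⟧) ^ (j+1)} < Ideal.span {(X : k⟦X⟧) ^ j} := by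
    refine lt_of_le_of_ne (Ideal.span_singleton_le_span_singleton.2 (pow_dvd_pow _ j.le_succ)) ?_
    intro h
    have := Ideal.span_singleton_le_span_singleton.1 h.ge
    rw [X_pow_dvd_X_pow_iff] at this
    omega
  refine ⟨hlt, fun K h1 h2 => ?_⟩
  have hKbot : K ≠ ⊥ := by
    intro h
    rw [h] at h1
    exact (not_lt_bot h1)
  obtain ⟨m, hm⟩ := IsDiscreteValuationRing.ideal_eq_span_pow_irreducible hKbot X_irreducible
  rw [hm] at h1 h2
  have hm1 : m ≤ j + 1 := X_pow_dvd_X_pow_iff.1 (Ideal.span_singleton_le_span_singleton.1 h1.le)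
  have hm2 : j ≤ m := X_pow_dvd_X_pow_iff.1 (Ideal.span_singleton_le_span_singleton.1 h2.le)
  have hne1 : m ≠ j + 1 := by rintro rfl; exact lt_irrefl _ h1
  have hne2 : m ≠ j := by rintro rfl; exact lt_irrefl _ h2
  omega

lemma isUnit_order_eq_zero (u : (k⟦X⟧)ˣ) : ((u : k⟦X⟧)).order = 0 := by
  have h := PowerSeries.order_mul (u : k⟦X⟧) ((u⁻¹ : (k⟦X⟧)ˣ) : k⟦X⟧)
  rw [Units.mul_inv, PowerSeries.order_one] at h
  exact (add_eq_zero.1 h.symm).1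

lemma exists_compositionSeries_quot_span (c : k⟦X⟧) (hc : c ≠ 0) :
    ∃ s : CompositionSeries (Submodule k⟦X⟧ (k⟦X⟧ ⧸ (Ideal.span {c} : Submodule k⟦X⟧ k⟦X⟧))),
      s.head = ⊥ ∧ s.last = ⊤ ∧ (s.length : ℕ∞) = c.order := by
  obtain ⟨n, u, hcu⟩ := IsDiscreteValuationRing.eq_unit_mul_pow_irreducible hc X_irreducible
  have horder : c.order = n := by
    rw [hcu, order_mul, isUnit_order_eq_zero, order_X_pow, zero_add]
  have hspan : (Ideal.span {c} : Submodule k⟦X⟧ k⟦X⟧) = Ideal.span {(X : k⟦X⟧) ^ n} := by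
    exact (Ideal.span_singleton_eq_span_singleton.2 ⟨u, by rw [hcu, mul_comm]⟩).symm
  set p : Submodule k⟦X⟧ k⟦X⟧ := Ideal.span {c} with hp
  have hple : ∀ m ≤ n, p ≤ Ideal.span {(X : k⟦X⟧) ^ m} := fun m hm => by
    rw [hspan]
    exact Ideal.span_singleton_le_span_singleton.2 (pow_dvd_pow _ hm)
  refine ⟨⟨n, fun i => map p.mkQ (Ideal.span {(X : k⟦X⟧) ^ (n - i.1)}), fun i => ?_⟩, ?_, ?_, ?_⟩
  · have h1 : n - i.castSucc.1 = (n - i.succ.1) + 1 := by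
      have := i.2; simp only [Fin.coe_castSucc, Fin.val_succ]; omega
    have := covBy_map_mkQ p (hple _ (by omega)) (hple _ (by omega))
      (span_X_pow_covBy (k := k) (n - i.succ.1))
    rw [← h1] at this
    exact this
  · show map p.mkQ (Ideal.span {(X : k⟦X⟧) ^ (n - (0 : Fin (n+1)).1)}) = ⊥
    have : (Ideal.span {(X : k⟦X⟧) ^ (n - (0 : Fin (n+1)).1)} : Submodule k⟦X⟧ k⟦X⟧) = p := by
      simp only [Fin.val_zero, Nat.sub_zero]
      exact hspan.symm
    rw [this]
    exact le_bot_iff.1 (Submodule.map_le_iff_le_comap.2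
      (by rw [Submodule.comap_bot, Submodule.ker_mkQ]))
  · show map p.mkQ (Ideal.span {(X : k⟦X⟧) ^ (n - (Fin.last n).1)}) = ⊤
    simp only [Fin.val_last, Nat.sub_self, pow_zero, Ideal.span_singleton_one]
    rw [Submodule.map_top, Submodule.range_mkQ]
  · show ((n : ℕ) : ℕ∞) = c.order
    rw [horder]

lemma my_order_prod {ι : Type*} (s : Finset ι) (f : ι → k⟦X⟧) :
    (∏ i ∈ s, f i).order = ∑ i ∈ s, (f i).order := by
  classical
  induction s using Finset.induction with
  | empty => simp [PowerSeries.order_one]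
  | insert _ _ hx ih =>
    rw [Finset.prod_insert hx, Finset.sum_insert hx, order_mul, ih]

end DVRquot

section Trace
variable {R : Type*} [CommRing R] [IsDomain R] {B : Type*} [CommRing B] [Algebra R B]
  {d : ℕ} (A : Subalgebra R B) (β : Module.Basis (Fin d) R B) (α : Module.Basis (Fin d) R A)

open Algebra Matrix

lemma trace_eq_trace_of_subalgebra
    (hW : (β.toMatrix (fun i => ((α i : A) : B))).det ≠ 0) (a : A) :
    Algebra.trace R A a = Algebra.trace R B (a : B) := by
  classical
  set W : Matrix (Fin d) (Fin d) R := β.toMatrix (fun i => ((α i : A) : B)) with hWdef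
  set M1 : Matrix (Fin d) (Fin d) R := leftMulMatrix β (a : B) with hM1
  set M2 : Matrix (Fin d) (Fin d) R := leftMulMatrix α a with hM2
  have key : M1 * W = W * M2 := by
    ext i j
    have e1 : ((a : B) * ((α j : A) : B)) = ∑ m, W m j • ((a : B) * β m) := by
      conv_lhs => rw [← Module.Basis.sum_toMatrix_smul_self β (fun i => ((α i : A) : B)) j]
      rw [Finset.mul_sum]
      exact Finset.sum_congr rfl fun m _ => (mul_smul_comm _ _ _)
    have e2 : ((a * α j : A) : B) = ∑ m, (α.repr (a * α j)) m • ((α m : A) : B) := by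
      have := congrArg A.val.toLinearMap (α.sum_repr (a * α j))
      rw [map_sum] at this
      simp only [_root_.map_smul] at this
      exact this.symm
    have lhs_eq : (M1 * W) i j = (β.repr ((a : B) * ((α j : A) : B))) i := by
      rw [e1, map_sum, Finsupp.coe_finset_sum, Finset.sum_apply]
      rw [Matrix.mul_apply]
      refine Finset.sum_congr rfl fun m _ => ?_
      rw [_root_.map_smul, hM1, Algebra.leftMulMatrix_eq_repr_mul]
      simp only [hWdef, Module.Basis.toMatrix_apply, Finsupp.smul_apply, smul_eq_mul]
      ring
    have rhs_eq : (W * M2) i j = (β.repr ((a : B) * ((α j : A) : B))) i := by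
      have hcoe : ((a : B) * ((α j : A) : B)) = ((a * α j : A) : B) := by
        simp
      rw [hcoe, e2, map_sum, Finsupp.coe_finset_sum, Finset.sum_apply]
      rw [Matrix.mul_apply]
      refine Finset.sum_congr rfl fun m _ => ?_
      rw [_root_.map_smul, hM2, Algebra.leftMulMatrix_eq_repr_mul]
      simp only [hWdef, Module.Basis.toMatrix_apply, Finsupp.smul_apply, smul_eq_mul]
      ring
    rw [lhs_eq, rhs_eq]
  -- pass to the fraction field
  let K := FractionRing R
  let f := algebraMap R K
  have hf : Function.Injective f := IsFractionRing.injective R K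
  have hdet : ((f.mapMatrix W) : Matrix (Fin d) (Fin d) K).det ≠ 0 := by
    rw [← RingHom.map_det]
    intro h
    exact hW (hf (by rw [h, map_zero]))
  haveI : Invertible (f.mapMatrix W) :=
    Matrix.invertibleOfIsUnitDet _ (isUnit_iff_ne_zero.2 hdet)
  have key' : f.mapMatrix M1 * f.mapMatrix W = f.mapMatrix W * f.mapMatrix M2 := by
    rw [← _root_.map_mul, ← _root_.map_mul, key]
  have htr : (f.mapMatrix M1).trace = (f.mapMatrix M2).trace := by
    have hM1' : f.mapMatrix M1 = f.mapMatrix W * f.mapMatrix M2 * ⅟(f.mapMatrix W) := by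
      rw [← key', mul_assoc, mul_invOf_self, mul_one]
    rw [hM1', Matrix.trace_mul_comm, ← mul_assoc, invOf_mul_self, one_mul]
  have hmaptr : ∀ (M : Matrix (Fin d) (Fin d) R), (f.mapMatrix M).trace = f M.trace := by
    intro M
    exact (AddMonoidHom.map_trace f.toAddMonoidHom M).symm
  rw [hmaptr, hmaptr] at htr
  have := hf htr
  rw [Algebra.trace_eq_matrix_trace β (a : B), Algebra.trace_eq_matrix_trace α a]
  rw [← hM1, ← hM2]
  exact this.symm

end Trace

set_option maxHeartbeats 2000000 in
/-- Let `k` be a field, `R = k⟦t⟧` the formal power series ring, `B` a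
commutative `R`-algebra that is free of rank `d` as an `R`-module, and `A ⊆ B` an
`R`-subalgebra that is also free of rank `d` as an `R`-module. Let `α` be an `R`-basis of
`A` and `β` an `R`-basis of `B`, and assume `disc_R(β) ≠ 0`. Then the quotient `B/A` is an
`R`-module of finite length, `disc_R(α) ≠ 0`, and
`ord_t(disc_R(α)) = ord_t(disc_R(β)) + 2 · length_R(B/A)`, the length being expressed here
as the length of any composition series of `B/A`. -/
theorem order_discr_eq_order_discr_add_two_mul_length
    (k : Type*) [Field k] (d : ℕ) (B : Type*) [CommRing B]
    [Algebra (PowerSeries k) B]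
    (A : Subalgebra (PowerSeries k) B)
    (β : Module.Basis (Fin d) (PowerSeries k) B)
    (α : Module.Basis (Fin d) (PowerSeries k) A)
    (hβ : Algebra.discr (PowerSeries k) (⇑β) ≠ 0) :
    IsFiniteLength (PowerSeries k) (B ⧸ Subalgebra.toSubmodule A) ∧
    Algebra.discr (PowerSeries k) (⇑α) ≠ 0 ∧
    ∀ s : CompositionSeries (Submodule (PowerSeries k) (B ⧸ Subalgebra.toSubmodule A)),
      s.head = ⊥ → s.last = ⊤ →
      (Algebra.discr (PowerSeries k) (⇑α)).order
        = (Algebra.discr (PowerSeries k) (⇑β)).order + 2 * (s.length : ℕ∞) := by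
  classical
  -- Smith normal form of A.toSubmodule inside B
  obtain ⟨n, snf⟩ := Submodule.smithNormalForm β (Subalgebra.toSubmodule A)
  let eAS : A ≃ₗ[PowerSeries k] (Subalgebra.toSubmodule A) :=
    { toFun := fun x => ⟨x.1, x.2⟩
      invFun := fun x => ⟨x.1, x.2⟩
      map_add' := fun x y => rfl
      map_smul' := fun r x => rfl
      left_inv := fun x => rfl
      right_inv := fun x => rfl }
  let αS : Module.Basis (Fin d) (PowerSeries k) (Subalgebra.toSubmodule A) := α.map eAS
  have hαS : ∀ m, ((αS m : B)) = ((α m : A) : B) := by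
    intro m
    show (((α.map eAS) m : Subalgebra.toSubmodule A) : B) = _
    rw [Module.Basis.map_apply]
    rfl
  have hnd : n = d := by
    have e := snf.bN.indexEquiv αS
    simpa using Fintype.card_congr e
  subst hnd
  have hfbij : Function.Bijective snf.f := Finite.injective_iff_bijective.1 snf.f.injective
  let σ : Fin n ≃ Fin n := Equiv.ofBijective snf.f hfbij
  set c : Fin n → PowerSeries k := fun j => snf.a (σ.symm j) with hc
  let bA : Module.Basis (Fin n) (PowerSeries k) (Subalgebra.toSubmodule A) := snf.bN.reindex σ
  have hbA : ∀ j, ((bA j : B)) = c j • snf.bM j := by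
    intro j
    rw [Module.Basis.reindex_apply, snf.snf (σ.symm j)]
    have hfj : snf.f (σ.symm j) = j := σ.apply_symm_apply j
    rw [hfj]
  have hc0 : ∀ j, c j ≠ 0 := by
    intro j h
    refine bA.ne_zero j ?_
    have : ((bA j : B)) = 0 := by rw [hbA j, h, zero_smul]
    exact ZeroMemClass.coe_eq_zero.1 this
  -- membership in A.toSubmodule via divisibility of coordinates
  have hAspan : Subalgebra.toSubmodule A
      = Submodule.span (PowerSeries k) (Set.range fun j => c j • snf.bM j) := by
    conv_lhs => rw [← Submodule.map_subtype_top (Subalgebra.toSubmodule A), ← bA.span_eq]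
    rw [Submodule.map_span, ← Set.range_comp]
    rw [show ((Subalgebra.toSubmodule A).subtype ∘ ⇑bA) = (fun j => c j • snf.bM j)
      from funext fun j => hbA j]
  have hmem : ∀ x : B, x ∈ Subalgebra.toSubmodule A
      ↔ ∀ j, snf.bM.repr x j ∈ (Ideal.span {c j} : Ideal (PowerSeries k)) := by
    intro x
    rw [(SetLike.ext_iff.1 hAspan x).trans (mem_span_range_iff_exists_fun _)]
    constructor
    · rintro ⟨r, rfl⟩ j
      have : ∑ i, r i • c i • snf.bM i = ∑ i, (r i * c i) • snf.bM i := by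
        refine Finset.sum_congr rfl fun i _ => ?_
        rw [smul_smul]
      rw [this, Module.Basis.repr_sum_self]
      exact Ideal.mem_span_singleton.2 (dvd_mul_left _ _)
    · intro h
      choose r hr using fun j => Ideal.mem_span_singleton.1 (h j)
      refine ⟨fun j => r j, ?_⟩
      have : ∑ i, r i • c i • snf.bM i = ∑ i, (snf.bM.repr x i) • snf.bM i := by
        refine Finset.sum_congr rfl fun i _ => ?_
        rw [smul_smul, hr i, mul_comm]
      rw [this, Module.Basis.sum_repr]
  -- the quotient is isomorphic to a product of cyclic modules
  let φ : B →ₗ[PowerSeries k] ∀ j : Fin n,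
      (PowerSeries k ⧸ (Ideal.span {c j} : Submodule (PowerSeries k) (PowerSeries k))) :=
    LinearMap.pi fun j => ((Ideal.span {c j} :
      Submodule (PowerSeries k) (PowerSeries k)).mkQ).comp
      ((LinearMap.proj j).comp snf.bM.equivFun.toLinearMap)
  have hker : LinearMap.ker φ = Subalgebra.toSubmodule A := by
    ext x
    rw [LinearMap.mem_ker, hmem x]
    constructor
    · intro h j
      have hj := congrFun h j
      simp only [φ, LinearMap.pi_apply, LinearMap.comp_apply, LinearMap.proj_apply,
        Module.Basis.equivFun_apply, LinearEquiv.coe_coe, Pi.zero_apply] at hj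
      rwa [Submodule.mkQ_apply, Submodule.Quotient.mk_eq_zero] at hj
    · intro h
      funext j
      simp only [φ, LinearMap.pi_apply, LinearMap.comp_apply, LinearMap.proj_apply,
        Module.Basis.equivFun_apply, LinearEquiv.coe_coe, Pi.zero_apply]
      rw [Submodule.mkQ_apply, Submodule.Quotient.mk_eq_zero]
      exact h j
  have hsurj : Function.Surjective φ := by
    intro y
    choose r hr using fun j => Submodule.mkQ_surjective
      (Ideal.span {c j} : Submodule (PowerSeries k) (PowerSeries k)) (y j)
    refine ⟨snf.bM.equivFun.symm r, ?_⟩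
    funext j
    simp only [φ, LinearMap.pi_apply, LinearMap.comp_apply, LinearMap.proj_apply,
      Module.Basis.equivFun_apply, LinearEquiv.coe_coe]
    rw [Module.Basis.equivFun_symm_apply]
    have : (snf.bM.repr (∑ i, r i • snf.bM i)) j = r j := by
      rw [Module.Basis.repr_sum_self]
    rw [this]
    exact hr j
  let e : (B ⧸ Subalgebra.toSubmodule A) ≃ₗ[PowerSeries k] ∀ j : Fin n,
      (PowerSeries k ⧸ (Ideal.span {c j} : Submodule (PowerSeries k) (PowerSeries k))) :=
    (Submodule.quotEquivOfEq _ _ hker.symm).trans (φ.quotKerEquivOfSurjective hsurj)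
  -- composition series of the quotient
  have hseries : ∀ j : Fin n, ∃ s : CompositionSeries (Submodule (PowerSeries k)
      (PowerSeries k ⧸ (Ideal.span {c j} : Submodule (PowerSeries k) (PowerSeries k)))),
      s.head = ⊥ ∧ s.last = ⊤ ∧ s.length = (c j).order.toNat := by
    intro j
    obtain ⟨s, h1, h2, h3⟩ := exists_compositionSeries_quot_span (c j) (hc0 j)
    refine ⟨s, h1, h2, ?_⟩
    have := congrArg ENat.toNat h3
    simpa using this
  obtain ⟨sPi, hPih, hPil, hPilen⟩ := exists_compositionSeries_pi _
    (fun j => (c j).order.toNat) hseries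
  obtain ⟨s₀, h₀h, h₀l, h₀len⟩ := exists_compositionSeries_congr e.symm sPi hPih hPil
  -- matrices
  set W : Matrix (Fin n) (Fin n) (PowerSeries k) :=
    β.toMatrix (fun i => ((α i : A) : B)) with hWdef
  set U : Matrix (Fin n) (Fin n) (PowerSeries k) := αS.toMatrix ⇑bA with hUdef
  set V : Matrix (Fin n) (Fin n) (PowerSeries k) :=
    β.toMatrix (fun j => ((bA j : B))) with hVdef
  set Q : Matrix (Fin n) (Fin n) (PowerSeries k) := β.toMatrix ⇑snf.bM with hQdef
  have hVWU : V = W * U := by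
    funext i j
    have hsum : ((bA j : B)) = ∑ m, U m j • ((αS m : B)) := by
      have := Module.Basis.sum_toMatrix_smul_self αS ⇑bA j
      have := congrArg (Subalgebra.toSubmodule A).subtype this
      rw [map_sum] at this
      simp only [_root_.map_smul] at this
      exact this.symm
    rw [hVdef, Module.Basis.toMatrix_apply, hsum, map_sum, Finsupp.coe_finset_sum, Finset.sum_apply,
      Matrix.mul_apply]
    refine Finset.sum_congr rfl fun m _ => ?_
    rw [_root_.map_smul, hαS m, hWdef, Module.Basis.toMatrix_apply]
    simp only [Finsupp.smul_apply, smul_eq_mul]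
    exact mul_comm _ _
  have hVQ : V = Q * Matrix.diagonal c := by
    funext i j
    rw [hVdef, Module.Basis.toMatrix_apply, hbA j, _root_.map_smul, Matrix.mul_diagonal, hQdef,
      Module.Basis.toMatrix_apply]
    simp only [Finsupp.smul_apply, smul_eq_mul]
    exact mul_comm _ _
  have hUunit : IsUnit U.det := by
    haveI := Module.Basis.invertibleToMatrix αS bA
    exact Matrix.isUnit_det_of_invertible U
  have hQunit : IsUnit Q.det := by
    haveI := Module.Basis.invertibleToMatrix β snf.bM
    exact Matrix.isUnit_det_of_invertible Q
  have hdet_eq : W.det * U.det = Q.det * ∏ j, c j := by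
    rw [← Matrix.det_mul, ← hVWU, hVQ, Matrix.det_mul, Matrix.det_diagonal]
  have hprod0 : (∏ j, c j) ≠ 0 := Finset.prod_ne_zero_iff.2 fun j _ => hc0 j
  have hWdet0 : W.det ≠ 0 := by
    intro h
    rw [h, zero_mul] at hdet_eq
    exact (mul_ne_zero hQunit.ne_zero hprod0) hdet_eq.symm
  -- order computation for det W
  have horderU : U.det.order = 0 := by
    obtain ⟨u, hu⟩ := hUunit
    rw [← hu]; exact isUnit_order_eq_zero u
  have horderQ : Q.det.order = 0 := by
    obtain ⟨u, hu⟩ := hQunit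
    rw [← hu]; exact isUnit_order_eq_zero u
  have hWorder : W.det.order = ∑ j, (c j).order := by
    have h := congrArg PowerSeries.order hdet_eq
    rw [order_mul, order_mul, horderU, horderQ, add_zero, zero_add, my_order_prod] at h
    exact h
  -- discriminants
  have hdiscr_mv : Algebra.discr (PowerSeries k) (fun i => ((α i : A) : B))
      = W.det ^ 2 * Algebra.discr (PowerSeries k) ⇑β := by
    have hmv : (fun i => ((α i : A) : B))
        = (W.transpose.map (algebraMap (PowerSeries k) B)).mulVec ⇑β := by
      funext j
      rw [← Module.Basis.sum_toMatrix_smul_self β (fun i => ((α i : A) : B)) j]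
      simp only [Matrix.mulVec, dotProduct, Matrix.map_apply, Matrix.transpose_apply]
      refine Finset.sum_congr rfl fun m _ => ?_
      rw [Algebra.smul_def, hWdef]
    rw [hmv, Algebra.discr_of_matrix_mulVec, Matrix.det_transpose]
  have hdiscrA : Algebra.discr (PowerSeries k) ⇑α
      = Algebra.discr (PowerSeries k) (fun i => ((α i : A) : B)) := by
    rw [Algebra.discr_def, Algebra.discr_def]
    congr 1
    funext i j
    rw [Algebra.traceMatrix_apply, Algebra.traceMatrix_apply, Algebra.traceForm_apply,
      Algebra.traceForm_apply]
    rw [trace_eq_trace_of_subalgebra A β α hWdet0 (α i * α j)]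
    rw [MulMemClass.coe_mul]
  have hdiscrA0 : Algebra.discr (PowerSeries k) (⇑α) ≠ 0 := by
    rw [hdiscrA, hdiscr_mv]
    exact mul_ne_zero (pow_ne_zero 2 hWdet0) hβ
  refine ⟨isFiniteLength_of_exists_compositionSeries ⟨s₀, h₀h, h₀l⟩, hdiscrA0, ?_⟩
  intro s hsh hsl
  -- all composition series have the same length
  have hlen : s.length = s₀.length :=
    (CompositionSeries.jordan_holder s s₀ (by rw [hsh, h₀h]) (by rw [hsl, h₀l])).length_eq
  have hslen : (s.length : ℕ∞) = W.det.order := by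
    rw [hlen, h₀len, hPilen, hWorder, Nat.cast_sum]
    refine Finset.sum_congr rfl fun j _ => ?_
    exact ENat.coe_toNat ((order_finite_iff_ne_zero.2 (hc0 j)).ne)
  rw [hdiscrA, hdiscr_mv, pow_two, order_mul, order_mul, hslen]
  rw [two_mul]
  abel
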